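/- Every ε-Hermitian A-module is isomorphic to an orthogonal direct sum of simple ε-Hermitian A-modules. -/

import Mathlib

/-- `B` is an `ε`-Hermitian form on the `A`-module `E`, with respect to the involution
`τ` of `A`: it is biadditive, `A`-linear in the first variable, `(ε, τ)`-Hermitian
symmetric, and non-degenerate. -/
def IsHermForm (A : Type) [CommRing A] (τ : A → A) (ε : A)
    (E : Type) [AddCommGroup E] [Module A E] (B : E → E → A) : Prop :=
  (∀ u u' v, B (u + u') v = B u v + B u' v) ∧
  (∀ u v v', B u (v + v') = B u v + B u v') ∧
  (∀ (a : A) (u v : E), B (a • u) v = a * B u v) ∧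
  (∀ u v, B u v = ε * τ (B v u)) ∧
  (∀ u, (∀ v, B u v = 0) → u = 0)

/-- The `ε`-Hermitian `A`-module `(E, B)` is simple: it is nonzero and every
non-degenerate `A`-submodule is `⊥` or `⊤`. -/
def IsSimpleHerm (A : Type) [CommRing A] (τ : A → A) (ε : A)
    (E : Type) [AddCommGroup E] [Module A E] (B : E → E → A) : Prop :=
  Nontrivial E ∧
    ∀ N : Submodule A E, (∀ u ∈ N, (∀ v ∈ N, B u v = 0) → u = 0) → N = ⊥ ∨ N = ⊤


open Module

def kerIdeal {k A : Type} [Field k] [CommRing A] [Algebra k A]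
    (l : A →ₗ[k] k) : Submodule A A where
  carrier := {x | ∀ a : A, l (a * x) = 0}
  zero_mem' := by intro a; simp
  add_mem' := by
    intro x y hx hy a
    rw [mul_add, map_add, hx a, hy a, add_zero]
  smul_mem' := by
    intro c x hx a
    have h : a * (c • x) = (a * c) * x := by
      simp only [smul_eq_mul]; ring
    rw [h, hx (a * c)]

lemma mem_kerIdeal_iff {k A : Type} [Field k] [CommRing A] [Algebra k A]
    {l : A →ₗ[k] k} {x : A} : x ∈ kerIdeal l ↔ ∀ a : A, l (a * x) = 0 := Iff.rfl

theorem exists_frob (k A : Type) [Field k] [CommRing A] [Algebra k A]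
    [FiniteDimensional k A] [IsSemisimpleRing A] :
    ∃ l : A →ₗ[k] k, ∀ x : A, (∀ a : A, l (a * x) = 0) → x = 0 := by
  classical
  set S : Set ℕ :=
    Set.range (fun l : A →ₗ[k] k => finrank k ((kerIdeal l).restrictScalars k)) with hS
  have hSne : S.Nonempty := ⟨_, ⟨0, rfl⟩⟩
  obtain ⟨l, hl⟩ := Nat.sInf_mem hSne
  simp only [] at hl
  refine ⟨l, ?_⟩
  have hKbot : kerIdeal l = ⊥ := by
    by_contra hK
    set K := kerIdeal l with hKdef
    obtain ⟨J, hJ⟩ := exists_isCompl K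
    have h1 : (1 : A) ∈ K ⊔ J := by rw [hJ.codisjoint.eq_top]; trivial
    obtain ⟨e, he, f, hf, hef⟩ := Submodule.mem_sup.mp h1
    have hbotKJ : K ⊓ J = ⊥ := hJ.disjoint.eq_bot
    have hKJ : ∀ x ∈ K, ∀ y ∈ J, x * y = 0 := by
      intro x hx y hy
      have h1 : x * y ∈ K := by
        have := K.smul_mem y hx
        simpa [smul_eq_mul, mul_comm] using this
      have h2 : x * y ∈ J := by
        have := J.smul_mem x hy
        simpa [smul_eq_mul] using this
      have h3 : x * y ∈ K ⊓ J := ⟨h1, h2⟩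
      rw [hbotKJ] at h3
      simpa using h3
    have hee : e * e = e := by
      have h : e * (e + f) = e * 1 := by rw [hef]
      rw [mul_add, mul_one, hKJ e he f hf, add_zero] at h
      exact h
    have heK : e ≠ 0 := by
      intro h0
      apply hK
      rw [eq_bot_iff]
      intro x hx
      have hf1 : f = 1 := by rw [← hef, h0, zero_add]
      have h2 : x * f = 0 := hKJ x hx f hf
      rw [hf1, mul_one] at h2
      simpa using h2
    have heJ : e ∉ J := by
      intro hj
      have h2 : e ∈ K ⊓ J := ⟨he, hj⟩
      rw [hbotKJ] at h2
      exact heK (by simpa using h2)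
    set Jk := J.restrictScalars k with hJk
    have hqe : Jk.mkQ e ≠ 0 := by
      simpa [Submodule.Quotient.mk_eq_zero] using (show e ∉ Jk from heJ)
    obtain ⟨φ, hφ⟩ : ∃ φ : Module.Dual k (A ⧸ Jk), φ (Jk.mkQ e) ≠ 0 := by
      by_contra h
      push_neg at h
      exact hqe ((Module.forall_dual_apply_eq_zero_iff k _).mp h)
    set μ : A →ₗ[k] k := φ.comp Jk.mkQ with hμ
    have hμJ : ∀ y ∈ J, μ y = 0 := by
      intro y hy
      have h2 : Jk.mkQ y = 0 := by simpa [Submodule.Quotient.mk_eq_zero] using (show y ∈ Jk from hy)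
      simp [hμ, h2]
    have hμe : μ e ≠ 0 := hφ
    set l' := l + μ with hl'
    have hsub : ∀ x ∈ kerIdeal l', x ∈ K := by
      intro x hx
      have hfxK : f * x ∈ K := by
        rw [mem_kerIdeal_iff]
        intro a
        have hmemJ : (f * a) * x ∈ J := by
          have h := J.smul_mem (a * x) hf
          have heq : (f * a) * x = (a * x) * f := by ring
          rw [heq]
          simpa [smul_eq_mul, mul_comm] using h
        have h1 : l' ((f * a) * x) = 0 := mem_kerIdeal_iff.mp hx (f * a)
        have h2 : μ ((f * a) * x) = 0 := hμJ _ hmemJ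
        have h3 : l ((f * a) * x) = 0 := by
          rw [hl'] at h1
          simpa [h2] using h1
        have heq2 : a * (f * x) = (f * a) * x := by ring
        rw [heq2]
        exact h3
      have hfxJ : f * x ∈ J := by
        have h := J.smul_mem x hf
        simpa [smul_eq_mul, mul_comm] using h
      have hfx : f * x = 0 := by
        have h2 : f * x ∈ K ⊓ J := ⟨hfxK, hfxJ⟩
        rw [hbotKJ] at h2
        simpa using h2
      have hxe : x = e * x := by
        calc x = 1 * x := (one_mul x).symm
        _ = (e + f) * x := by rw [hef]
        _ = e * x + f * x := add_mul e f x
        _ = e * x := by rw [hfx, add_zero]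
      rw [hxe]
      have h := K.smul_mem x he
      simpa [smul_eq_mul, mul_comm] using h
    have heK' : e ∉ kerIdeal l' := by
      intro hmem
      have h1 : l' (e * e) = 0 := mem_kerIdeal_iff.mp hmem e
      have h2 : l (e * e) = 0 := mem_kerIdeal_iff.mp he e
      rw [hee] at h1 h2
      rw [hl'] at h1
      simp only [LinearMap.add_apply, h2, zero_add] at h1
      exact hμe h1
    have hlt : (Submodule.restrictScalars k (kerIdeal l')) < Submodule.restrictScalars k K := by
      refine lt_of_le_of_ne (fun x hx => hsub x hx) (fun h => heK' ?_)
      have h2 : e ∈ Submodule.restrictScalars k (kerIdeal l') := by rw [h]; exact he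
      exact h2
    have hfin := Submodule.finrank_lt_finrank_of_lt hlt
    have hmemS : finrank k ((kerIdeal l').restrictScalars k) ∈ S := ⟨l', rfl⟩
    have hge := Nat.sInf_le hmemS
    omega
  intro x hx
  have h2 : x ∈ kerIdeal l := hx
  rw [hKbot] at h2
  simpa using h2

/-- Splitting lemma: if `B` restricted to `N` is nondegenerate and `W` is the
(left-)orthogonal of `N`, then `E = N ⊕ W`. -/
theorem herm_split {k A : Type} [Field k] [CommRing A] [Algebra k A]
    [FiniteDimensional k A] [IsSemisimpleRing A]
    (τ : A ≃ₐ[k] A) (ε : A) (l : A →ₗ[k] k)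
    (hfrob : ∀ x : A, (∀ a : A, l (a * x) = 0) → x = 0)
    (E : Type) [AddCommGroup E] [Module A E] [Module k E]
    [IsScalarTower k A E] [Module.Finite A E] (B : E → E → A)
    (hherm : IsHermForm A τ ε E B)
    (N W : Submodule A E)
    (hWdef : ∀ u : E, u ∈ W ↔ ∀ v ∈ N, B u v = 0)
    (hndN : ∀ u ∈ N, (∀ v ∈ N, B u v = 0) → u = 0) :
    N ⊔ W = ⊤ ∧ N ⊓ W = ⊥ ∧
      finrank k (N.restrictScalars k) + finrank k (W.restrictScalars k) = finrank k E := by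
  classical
  obtain ⟨haddl, haddr, hsmul, hsym, hnd⟩ := hherm
  haveI : Module.Finite k E := Module.Finite.trans A E
  have hsmulr : ∀ (a : A) (u v : E), B u (a • v) = τ a * B u v := by
    intro a u v
    rw [hsym u (a • v), hsmul, map_mul, hsym u v]
    ring
  set Nk := N.restrictScalars k with hNk
  set Wk := W.restrictScalars k with hWk
  -- the functional map
  set Φ : E →ₗ[k] Module.Dual k ↥Nk :=
    { toFun := fun u =>
      { toFun := fun v => l (B u ↑v)
        map_add' := by
          intro v w
          show l (B u ↑(v + w)) = l (B u ↑v) + l (B u ↑w)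
          rw [Submodule.coe_add, haddr, map_add]
        map_smul' := by
          intro c v
          show l (B u ↑(c • v)) = (RingHom.id k) c • l (B u ↑v)
          rw [Submodule.coe_smul, ← algebraMap_smul A c (v : E), hsmulr,
            AlgEquiv.commutes, ← Algebra.smul_def, map_smul]
          rfl }
      map_add' := by
        intro u u'
        ext v
        simp only [LinearMap.coe_mk, AddHom.coe_mk, LinearMap.add_apply]
        rw [haddl, map_add]
      map_smul' := by
        intro c u
        ext v
        simp only [LinearMap.coe_mk, AddHom.coe_mk, RingHom.id_apply,
          LinearMap.smul_apply]
        rw [← algebraMap_smul A c u, hsmul, ← Algebra.smul_def, map_smul] } with hΦ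
  have hΦapp : ∀ (u : E) (v : ↥Nk), Φ u v = l (B u ↑v) := fun _ _ => rfl
  have hker : LinearMap.ker Φ = Wk := by
    ext u
    rw [LinearMap.mem_ker]
    constructor
    · intro h
      rw [Submodule.restrictScalars_mem, hWdef]
      intro v hv
      apply hfrob
      intro a
      have h2 : a * B u v = B u ((τ.symm a) • v) := by
        rw [hsmulr, AlgEquiv.apply_symm_apply]
      rw [h2]
      have h3 : Φ u ⟨(τ.symm a) • v, N.smul_mem _ hv⟩ = 0 := by rw [h]; rfl
      rwa [hΦapp] at h3
    · intro h
      ext v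
      rw [hΦapp]
      have h2 : B u ↑v = 0 := by
        rw [Submodule.restrictScalars_mem, hWdef] at h
        exact h ↑v v.2
      rw [h2, map_zero]
      rfl
  have hzero : ∀ x : E, x ∈ N → x ∈ W → x = 0 := by
    intro x hxN hxW
    exact hndN x hxN ((hWdef x).mp hxW)
  have hinf : N ⊓ W = ⊥ := by
    rw [eq_bot_iff]
    intro x hx
    rw [Submodule.mem_bot]
    exact hzero x hx.1 hx.2
  have hinfk : Nk ⊓ Wk = ⊥ := by
    rw [eq_bot_iff]
    intro x hx
    rw [Submodule.mem_bot]
    exact hzero x hx.1 hx.2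
  have hrn := LinearMap.finrank_range_add_finrank_ker Φ
  have hrange : finrank k ↥(LinearMap.range Φ) ≤ finrank k ↥Nk := by
    calc finrank k ↥(LinearMap.range Φ) ≤ finrank k (Module.Dual k ↥Nk) :=
          Submodule.finrank_le _
      _ = finrank k ↥Nk := Subspace.dual_finrank_eq
  have hWbig : finrank k ↥Nk + finrank k ↥Wk ≥ finrank k E := by
    rw [hker] at hrn
    omega
  have hsupinf := Submodule.finrank_sup_add_finrank_inf_eq Nk Wk
  rw [hinfk] at hsupinf
  have hbot0 : finrank k (⊥ : Submodule k E) = 0 := finrank_bot k E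
  have hsuple : finrank k ↥(Nk ⊔ Wk) ≤ finrank k E := Submodule.finrank_le _
  have hsupeq : finrank k ↥(Nk ⊔ Wk) = finrank k E := by omega
  have hsuptop : Nk ⊔ Wk = ⊤ := Submodule.eq_top_of_finrank_eq hsupeq
  have hrsup : (N ⊔ W).restrictScalars k = Nk ⊔ Wk := by
    ext x
    rw [Submodule.restrictScalars_mem, Submodule.mem_sup, Submodule.mem_sup]
    constructor
    · rintro ⟨y, hy, z, hz, rfl⟩; exact ⟨y, hy, z, hz, rfl⟩
    · rintro ⟨y, hy, z, hz, rfl⟩; exact ⟨y, hy, z, hz, rfl⟩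
  have hsup : N ⊔ W = ⊤ := by
    rw [← Submodule.restrictScalars_eq_top_iff (S := k), hrsup, hsuptop]
  refine ⟨hsup, hinf, ?_⟩
  omega

/-- The decomposition conclusion, abbreviated. -/
def HermDecomp (A : Type) [CommRing A] (τ : A → A) (ε : A)
    (E : Type) [AddCommGroup E] [Module A E] (B : E → E → A) : Prop :=
  ∃ (r : ℕ) (N : Fin r → Submodule A E),
    DirectSum.IsInternal N ∧
    (∀ i j, i ≠ j → ∀ u ∈ N i, ∀ v ∈ N j, B u v = 0) ∧
    (∀ i, N i ≠ ⊥ ∧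
      (∀ u ∈ N i, (∀ v ∈ N i, B u v = 0) → u = 0) ∧
      (∀ P : Submodule A E, P ≤ N i →
        (∀ u ∈ P, (∀ v ∈ P, B u v = 0) → u = 0) → P = ⊥ ∨ P = N i))

theorem herm_trivial {A : Type} [CommRing A] {E : Type} [AddCommGroup E] [Module A E]
    (τ : A → A) (ε : A) (B : E → E → A) (hE : Subsingleton E) :
    HermDecomp A τ ε E B := by
  refine ⟨0, Fin.elim0, ?_, fun i => i.elim0, fun i => i.elim0⟩
  rw [DirectSum.isInternal_submodule_iff_iSupIndep_and_iSup_eq_top]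
  constructor
  · intro i; exact i.elim0
  · rw [eq_top_iff]
    intro x _
    have : x = 0 := Subsingleton.elim x 0
    rw [this]
    exact Submodule.zero_mem _

theorem herm_aux {k A : Type} [Field k] [CommRing A] [Algebra k A]
    [FiniteDimensional k A] [IsSemisimpleRing A]
    (τ : A ≃ₐ[k] A) (ε : A) (l : A →ₗ[k] k)
    (hfrob : ∀ x : A, (∀ a : A, l (a * x) = 0) → x = 0) :
    ∀ (n : ℕ) (E : Type) [AddCommGroup E] [Module A E] [Module k E]
      [IsScalarTower k A E] [Module.Finite A E] (B : E → E → A),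
      IsHermForm A τ ε E B → finrank k E ≤ n → HermDecomp A τ ε E B := by
  intro n
  induction n with
  | zero =>
    intro E _ _ _ _ _ B hherm hrank
    haveI : Module.Finite k E := Module.Finite.trans A E
    have hsub : Subsingleton E := by
      have h0 : finrank k E = 0 := le_antisymm hrank (Nat.zero_le _)
      exact finrank_zero_iff.mp h0
    exact herm_trivial _ _ B hsub
  | succ n ih =>
    intro E _ _ _ _ _ B hherm hrank
    haveI : Module.Finite k E := Module.Finite.trans A E
    rcases subsingleton_or_nontrivial E with hE | hE
    · exact herm_trivial _ _ B hE
    obtain ⟨haddl, haddr, hsmul, hsym, hnd⟩ := id hherm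
    have hzerol : ∀ v : E, B 0 v = 0 := by
      intro v
      have h := haddl 0 0 v
      rw [add_zero] at h
      exact (left_eq_add.mp h)
    -- the set of dimensions of nonzero nondegenerate submodules
    set Sd : Set ℕ := {m : ℕ | ∃ N : Submodule A E, N ≠ ⊥ ∧
      (∀ u ∈ N, (∀ v ∈ N, B u v = 0) → u = 0) ∧
      finrank k ↥(N.restrictScalars k) = m} with hSd
    have htopne : (⊤ : Submodule A E) ≠ ⊥ := by
      intro h
      obtain ⟨x, hx⟩ := exists_ne (0 : E)
      apply hx
      have hx2 : x ∈ (⊥ : Submodule A E) := h ▸ Submodule.mem_top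
      simpa using hx2
    have htopnd : ∀ u ∈ (⊤ : Submodule A E), (∀ v ∈ (⊤ : Submodule A E), B u v = 0) → u = 0 :=
      fun u _ h => hnd u (fun v => h v Submodule.mem_top)
    have hSdne : Sd.Nonempty :=
      ⟨finrank k ↥((⊤ : Submodule A E).restrictScalars k), ⊤, htopne, htopnd, rfl⟩
    obtain ⟨N₀, hN0ne, hN0nd, hN0rank⟩ := Nat.sInf_mem hSdne
    -- the orthogonal complement
    set W : Submodule A E :=
      { carrier := {u : E | ∀ v ∈ N₀, B u v = 0}
        zero_mem' := fun v _ => hzerol v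
        add_mem' := fun hx hy v hv => by rw [haddl, hx v hv, hy v hv, add_zero]
        smul_mem' := fun a u hu v hv => by rw [hsmul, hu v hv, mul_zero] } with hWset
    have hWdef : ∀ u : E, u ∈ W ↔ ∀ v ∈ N₀, B u v = 0 := fun u => Iff.rfl
    obtain ⟨hsup, hinf, hrankeq⟩ :=
      herm_split τ ε l hfrob E B hherm N₀ W hWdef hN0nd
    have hzero : ∀ x : E, x ∈ N₀ → x ∈ W → x = 0 := by
      intro x h1 h2
      have h3 : x ∈ N₀ ⊓ W := ⟨h1, h2⟩
      rw [hinf] at h3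
      simpa using h3
    -- module structure on W
    haveI : IsNoetherian k E := IsNoetherian.iff_fg.mpr inferInstance
    haveI : IsNoetherian A E := isNoetherian_of_tower k inferInstance
    haveI : Module.Finite A ↥W := Module.Finite.iff_fg.mpr (IsNoetherian.noetherian W)
    set B' : ↥W → ↥W → A := fun u v => B ↑u ↑v with hB'
    have hherm' : IsHermForm A τ ε ↥W B' := by
      refine ⟨?_, ?_, ?_, ?_, ?_⟩
      · intro u u' v
        exact haddl ↑u ↑u' ↑v
      · intro u v v'
        exact haddr ↑u ↑v ↑v'
      · intro a u v
        exact hsmul a ↑u ↑v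
      · intro u v
        exact hsym ↑u ↑v
      · intro u h
        have hu : ∀ v : E, B ↑u v = 0 := by
          intro v
          have hv : v ∈ N₀ ⊔ W := by rw [hsup]; trivial
          obtain ⟨y, hy, z, hz, rfl⟩ := Submodule.mem_sup.mp hv
          have h5 : B (↑u) z = 0 := h ⟨z, hz⟩
          rw [haddr, u.2 y hy, h5, add_zero]
        exact Subtype.ext (hnd ↑u hu)
    -- dimension bound
    have hN0pos : 0 < finrank k ↥(N₀.restrictScalars k) := by
      haveI : Nontrivial ↥(N₀.restrictScalars k) := by
        rw [Submodule.nontrivial_iff_ne_bot]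
        intro h
        exact hN0ne ((Submodule.restrictScalars_eq_bot_iff k A E).mp h)
      exact Module.finrank_pos
    have hWrank : finrank k ↥W ≤ n := by
      have h1 : finrank k ↥W = finrank k ↥(W.restrictScalars k) := rfl
      omega
    obtain ⟨r', N', hint', horth', hsimp'⟩ := ih ↥W B' hherm' hWrank
    refine ⟨r' + 1, Fin.cons N₀ (fun i => (N' i).map W.subtype), ?_, ?_, ?_⟩
    · -- internal direct sum
      rw [DirectSum.isInternal_submodule_iff_iSupIndep_and_iSup_eq_top]
      constructor
      · rw [iSupIndep_def]
        intro i
        rcases Fin.eq_zero_or_eq_succ i with rfl | ⟨i', rfl⟩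
        · have hle : (⨆ j, ⨆ _ : j ≠ (0 : Fin (r' + 1)),
              Fin.cons N₀ (fun i => (N' i).map W.subtype) j) ≤ W := by
            refine iSup_le fun j => iSup_le fun hj => ?_
            obtain ⟨j', rfl⟩ := Fin.eq_succ_of_ne_zero hj
            rw [Fin.cons_succ]
            exact Submodule.map_subtype_le W (N' j')
          simp only [Fin.cons_zero]
          exact (disjoint_iff.mpr hinf).mono_right hle
        · simp only [Fin.cons_succ]
          rw [Submodule.disjoint_def]
          intro x hx hx2
          have hxW : x ∈ W := Submodule.map_subtype_le W (N' i') hx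
          set T : Submodule A ↥W := ⨆ j, ⨆ _ : j ≠ i', N' j with hT
          have hle2 : (⨆ j, ⨆ _ : j ≠ i'.succ,
              Fin.cons N₀ (fun i => (N' i).map W.subtype) j) ≤ N₀ ⊔ T.map W.subtype := by
            refine iSup_le fun j => iSup_le fun hj => ?_
            rcases Fin.eq_zero_or_eq_succ j with rfl | ⟨j', rfl⟩
            · simp only [Fin.cons_zero]
              exact le_sup_left
            · simp only [Fin.cons_succ]
              have hj' : j' ≠ i' := fun h => hj (by rw [h])
              exact le_trans
                (Submodule.map_mono (le_iSup₂ (f := fun j (_ : j ≠ i') => N' j) j' hj'))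
                le_sup_right
          have hx3 := hle2 hx2
          obtain ⟨y, hy, z, hz, hyz⟩ := Submodule.mem_sup.mp hx3
          have hzW : z ∈ W := Submodule.map_subtype_le W T hz
          have hyW : y ∈ W := by
            have h4 : y = x - z := by rw [← hyz]; abel
            rw [h4]
            exact W.sub_mem hxW hzW
          have hy0 : y = 0 := hzero y hy hyW
          have hxz : x = z := by rw [← hyz, hy0, zero_add]
          have hmem : x ∈ (N' i').map W.subtype ⊓ T.map W.subtype := ⟨hx, hxz ▸ hz⟩
          rw [← Submodule.map_inf W.subtype (Submodule.injective_subtype W)] at hmem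
          have hdisj : N' i' ⊓ T = ⊥ := (hint'.submodule_iSupIndep i').eq_bot
          rw [hdisj, Submodule.map_bot] at hmem
          simpa using hmem
      · have h1 : (⨆ i, Fin.cons N₀ (fun i => (N' i).map W.subtype) i) =
            N₀ ⊔ ⨆ j, (N' j).map W.subtype := by
          apply le_antisymm
          · refine iSup_le fun i => ?_
            rcases Fin.eq_zero_or_eq_succ i with rfl | ⟨i', rfl⟩
            · simp only [Fin.cons_zero]
              exact le_sup_left
            · simp only [Fin.cons_succ]
              exact le_trans (le_iSup (fun i => (N' i).map W.subtype) i') le_sup_right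
          · refine sup_le ?_ (iSup_le fun j => ?_)
            · exact le_iSup_of_le 0 (by simp only [Fin.cons_zero]; exact le_rfl)
            · exact le_iSup_of_le j.succ (by simp only [Fin.cons_succ]; exact le_rfl)
        rw [h1, ← Submodule.map_iSup, hint'.submodule_iSup_eq_top, Submodule.map_top,
          Submodule.range_subtype, hsup]
    · -- orthogonality
      intro i j hij u hu v hv
      rcases Fin.eq_zero_or_eq_succ i with rfl | ⟨i', rfl⟩ <;>
        rcases Fin.eq_zero_or_eq_succ j with rfl | ⟨j', rfl⟩
      · exact absurd rfl hij
      · simp only [Fin.cons_zero] at hu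
        simp only [Fin.cons_succ] at hv
        have hvW : v ∈ W := Submodule.map_subtype_le W (N' j') hv
        rw [hsym u v, hvW u hu, map_zero, mul_zero]
      · simp only [Fin.cons_succ] at hu
        simp only [Fin.cons_zero] at hv
        exact (Submodule.map_subtype_le W (N' i') hu) v hv
      · simp only [Fin.cons_succ] at hu hv
        have hij' : i' ≠ j' := fun h => hij (by rw [h])
        obtain ⟨u', hu', rfl⟩ := Submodule.mem_map.mp hu
        obtain ⟨v', hv', rfl⟩ := Submodule.mem_map.mp hv
        exact horth' i' j' hij' u' hu' v' hv'
    · -- each piece is nonzero, nondegenerate, simple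
      intro i
      rcases Fin.eq_zero_or_eq_succ i with rfl | ⟨i', rfl⟩
      · simp only [Fin.cons_zero]
        refine ⟨hN0ne, hN0nd, ?_⟩
        intro P hPle hPnd
        by_cases hPbot : P = ⊥
        · exact Or.inl hPbot
        right
        have hmem : finrank k ↥(P.restrictScalars k) ∈ Sd := ⟨P, hPbot, hPnd, rfl⟩
        have h1 : sInf Sd ≤ finrank k ↥(P.restrictScalars k) := Nat.sInf_le hmem
        have hle : P.restrictScalars k ≤ N₀.restrictScalars k := fun x hx => hPle hx
        have h2 := Submodule.eq_of_le_of_finrank_le hle (by rw [hN0rank]; exact h1)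
        exact Submodule.restrictScalars_injective k A E h2
      · simp only [Fin.cons_succ]
        obtain ⟨hne', hnd', hsimp''⟩ := hsimp' i'
        refine ⟨?_, ?_, ?_⟩
        · intro h
          apply hne'
          have h2 := congrArg (Submodule.comap W.subtype) h
          rwa [Submodule.comap_map_eq_of_injective (Submodule.injective_subtype W),
            Submodule.comap_bot, Submodule.ker_subtype] at h2
        · intro u hu hvan
          obtain ⟨u', hu', rfl⟩ := Submodule.mem_map.mp hu
          have h2 : u' = 0 :=
            hnd' u' hu' (fun v' hv' => hvan ↑v' (Submodule.mem_map_of_mem hv'))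
          rw [h2, map_zero]
        · intro P hPle hPnd
          set P' := P.comap W.subtype with hP'
          have hPW : P ≤ W := le_trans hPle (Submodule.map_subtype_le W (N' i'))
          have hmapP' : P'.map W.subtype = P := by
            rw [hP', Submodule.map_comap_subtype]
            exact inf_eq_right.mpr hPW
          have hP'le : P' ≤ N' i' := by
            intro x hx
            have h2 : (↑x : E) ∈ (N' i').map W.subtype := hPle hx
            obtain ⟨y, hy, hyx⟩ := Submodule.mem_map.mp h2
            have h3 : y = x := Subtype.ext hyx
            exact h3 ▸ hy
          have hPnd' : ∀ u ∈ P', (∀ v ∈ P', B' u v = 0) → u = 0 := by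
            intro u hu h
            refine Subtype.ext (hPnd ↑u hu ?_)
            intro v hv
            exact h ⟨v, hPW hv⟩ hv
          rcases hsimp'' P' hP'le hPnd' with h | h
          · left
            rw [← hmapP', h, Submodule.map_bot]
          · right
            rw [← hmapP', h]

/-- Every `ε`-Hermitian `A`-module is (isomorphic to) an orthogonal direct sum of simple
`ε`-Hermitian `A`-modules: `E` decomposes as an internal direct sum of pairwise
orthogonal non-degenerate submodules, each of which is simple as an `ε`-Hermitian
`A`-module. -/
theorem hermitian_module_orthogonal_decomposition {k A : Type} [Field k] [CharZero k]
    [CommRing A] [Algebra k A] [FiniteDimensional k A] [IsSemisimpleRing A]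
    (τ : A ≃ₐ[k] A) (hτ : ∀ a, τ (τ a) = a)
    (ε : A) (hε : ε = 1 ∨ ε = -1)
    (E : Type) [AddCommGroup E] [Module A E] [Module.Finite A E]
    (B : E → E → A) (hherm : IsHermForm A τ ε E B) :
    ∃ (r : ℕ) (N : Fin r → Submodule A E),
      DirectSum.IsInternal N ∧
      (∀ i j, i ≠ j → ∀ u ∈ N i, ∀ v ∈ N j, B u v = 0) ∧
      (∀ i, N i ≠ ⊥ ∧
        (∀ u ∈ N i, (∀ v ∈ N i, B u v = 0) → u = 0) ∧
        (∀ P : Submodule A E, P ≤ N i →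
          (∀ u ∈ P, (∀ v ∈ P, B u v = 0) → u = 0) → P = ⊥ ∨ P = N i)) := by
  obtain ⟨l, hfrob⟩ := exists_frob k A
  letI : Module k E := Module.compHom E (algebraMap k A)
  haveI : IsScalarTower k A E := IsScalarTower.of_algebraMap_smul fun r x => rfl
  exact herm_aux τ ε l hfrob (Module.finrank k E) E B hherm le_rfl
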